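/- (Failure of uniform substitution for N) For an atom p, the formula p → ¬¬p is N-valid, but the formula (p ∧ p) → ¬¬(p ∧ p) is not N-valid; hence the set of N-valid formulas is not closed under uniform substitution. -/

import Mathlib

/- Formalization of Lorenzen dialogue games, following Felscher's presentation.

   Propositional formulas are built from atoms using ¬, ∧, ∨, →.  A dialogue
   for a formula φ is a sequence of moves beginning with Proponent (P)
   asserting φ at position 0, with O moving at odd positions and P at even
   positions.  Each later move attacks or defends an earlier move of the other
   player, according to the particle rules.  Structural rules (D10, D11, D12,
   D13, E, and the variants D10*, D10′) constrain dialogues further.  P wins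
   if P made the last move and no moves are available to O; φ is S-valid if P
   has an S-winning strategy for φ. -/

namespace LorenzenDialogues

/-- Propositional formulas: atoms, ¬, ∧, ∨, →. -/
inductive Formula : Type
  | atom : ℕ → Formula
  | neg  : Formula → Formula
  | and  : Formula → Formula → Formula
  | or   : Formula → Formula → Formula
  | imp  : Formula → Formula → Formula
deriving DecidableEq

/-- Statements: formulas together with the symbolic attacks `?`, `∧_L`, `∧_R`. -/
inductive Statement : Type
  | form  : Formula → Statement
  | qmark : Statement
  | andL  : Statement
  | andR  : Statement
deriving DecidableEq

/-- Particle rules, attack part: which statements attack which formulas. -/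
inductive Attacks : Statement → Formula → Prop
  | andL (a b : Formula) : Attacks .andL (.and a b)
  | andR (a b : Formula) : Attacks .andR (.and a b)
  | qmark (a b : Formula) : Attacks .qmark (.or a b)
  | imp (a b : Formula) : Attacks (.form a) (.imp a b)
  | neg (a : Formula) : Attacks (.form a) (.neg a)

/-- Particle rules, defense part: `Defends χ a s` means `s` is a permitted
    defense of the formula `χ` against the attack `a`.  (A negation admits
    no defense.) -/
inductive Defends : Formula → Statement → Statement → Prop
  | andL (a b : Formula) : Defends (.and a b) .andL (.form a)
  | andR (a b : Formula) : Defends (.and a b) .andR (.form b)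
  | orL (a b : Formula) : Defends (.or a b) .qmark (.form a)
  | orR (a b : Formula) : Defends (.or a b) .qmark (.form b)
  | imp (a b : Formula) : Defends (.imp a b) (.form a) (.form b)

/-- A move: a statement, a flag recording whether it is an attack (`true`)
    or a defense (`false`), and the position of the earlier move it attacks,
    resp. the earlier attack it defends against. -/
structure Move : Type where
  statement : Statement
  isAttack : Bool
  ref : ℕ
deriving DecidableEq

/-- A dialogue: the initial formula asserted by P at position 0, followed by
    the list of later moves (the move at list index `i` occupies position
    `i + 1`; O moves at odd positions, P at even positions). -/
structure Dialogue : Type where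
  initial : Formula
  moves : List Move

/-- The statement asserted at position `n` (if any). -/
def Dialogue.stmtAt (d : Dialogue) (n : ℕ) : Option Statement :=
  if n = 0 then some (.form d.initial) else (d.moves[n - 1]?).map Move.statement

/-- The move at position `n ≥ 1` (if any); position 0 is the initial assertion,
    not a move. -/
def Dialogue.moveAt (d : Dialogue) (n : ℕ) : Option Move :=
  if n = 0 then none else d.moves[n - 1]?

/-- The move `m`, played at position `n ≥ 1`, is permitted by the particle
    rules: it refers to an earlier position of the other player; if it is an
    attack, it attacks a formula asserted there, and if it is a defense, it
    responds to an attack played there, as the particle rules prescribe. -/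
def MoveOK (d : Dialogue) (n : ℕ) (m : Move) : Prop :=
  m.ref < n ∧ m.ref % 2 ≠ n % 2 ∧
    (m.isAttack = true →
      ∃ ψ, d.stmtAt m.ref = some (.form ψ) ∧ Attacks m.statement ψ) ∧
    (m.isAttack = false →
      ∃ a χ, d.moveAt m.ref = some a ∧ a.isAttack = true ∧
        d.stmtAt a.ref = some (.form χ) ∧ Defends χ a.statement m.statement)

/-- The dialogue adheres to the particle rules (every move is legal). -/
def ParticleOK (d : Dialogue) : Prop :=
  ∀ i m, d.moves[i]? = some m → MoveOK d (i + 1) m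

/-- Position `n` carries a defense of the attack made at position `r`. -/
def IsDefenseOf (d : Dialogue) (n r : ℕ) : Prop :=
  ∃ m, d.moveAt n = some m ∧ m.isAttack = false ∧ m.ref = r

/-- Position `n` carries an attack on the assertion made at position `r`. -/
def IsAttackOn (d : Dialogue) (n r : ℕ) : Prop :=
  ∃ m, d.moveAt n = some m ∧ m.isAttack = true ∧ m.ref = r

/-- Position `n` carries an attack. -/
def IsAttackPos (d : Dialogue) (n : ℕ) : Prop :=
  ∃ m, d.moveAt n = some m ∧ m.isAttack = true

/-- The attack at position `r` is still open (no defense against it has yet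
    been played) before position `k`. -/
def OpenAt (d : Dialogue) (r k : ℕ) : Prop :=
  IsAttackPos d r ∧ ¬ ∃ j, j < k ∧ IsDefenseOf d j r

/-- (D10) P may assert an atomic formula only after it has been asserted by O
    before. -/
def D10 (d : Dialogue) : Prop :=
  ∀ n p, n % 2 = 0 → d.stmtAt n = some (.form (.atom p)) →
    ∃ j, j < n ∧ j % 2 = 1 ∧ d.stmtAt j = some (.form (.atom p))

/-- (D10*) P may assert an atom `p` only if O has asserted `p` or `¬p`
    before. -/
def D10star (d : Dialogue) : Prop :=
  ∀ n p, n % 2 = 0 → d.stmtAt n = some (.form (.atom p)) →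
    ∃ j, j < n ∧ j % 2 = 1 ∧
      (d.stmtAt j = some (.form (.atom p)) ∨
        d.stmtAt j = some (.form (.neg (.atom p))))

/-- (D10′) P may assert an atom `p` only if O has asserted `p` or `¬¬p`
    before. -/
def D10prime (d : Dialogue) : Prop :=
  ∀ n p, n % 2 = 0 → d.stmtAt n = some (.form (.atom p)) →
    ∃ j, j < n ∧ j % 2 = 1 ∧
      (d.stmtAt j = some (.form (.atom p)) ∨
        d.stmtAt j = some (.form (.neg (.neg (.atom p)))))

/-- (D11) When defending, only the most recent open attack may be responded
    to: the attack defended against is open, and no strictly more recent open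
    attack (against the same player) exists. -/
def D11 (d : Dialogue) : Prop :=
  ∀ n r, IsDefenseOf d n r →
    OpenAt d r n ∧ ¬ ∃ r', r < r' ∧ r' < n ∧ r' % 2 = r % 2 ∧ OpenAt d r' n

/-- (D12) An attack may be answered at most once. -/
def D12 (d : Dialogue) : Prop :=
  ∀ n₁ n₂ r, IsDefenseOf d n₁ r → IsDefenseOf d n₂ r → n₁ = n₂

/-- (D13) A P-assertion (made at an even position) may be attacked at most
    once. -/
def D13 (d : Dialogue) : Prop :=
  ∀ n₁ n₂ r, r % 2 = 0 → IsAttackOn d n₁ r → IsAttackOn d n₂ r → n₁ = n₂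

/-- (E) O can react only upon the immediately preceding P-statement. -/
def ERule (d : Dialogue) : Prop :=
  ∀ n m, n % 2 = 1 → d.moveAt n = some m → m.ref = n - 1

/-- A ruleset is a set of structural rules, i.e. a predicate on dialogues. -/
def Ruleset := Dialogue → Prop

/-- Ruleset D = {D10, D11, D12, D13}. -/
def rulesetD : Ruleset := fun d => D10 d ∧ D11 d ∧ D12 d ∧ D13 d

/-- Ruleset E = D ∪ {E}. -/
def rulesetE : Ruleset := fun d => rulesetD d ∧ ERule d

/-- Ruleset CL = E − {D11, D12} = {D10, D13, E}. -/
def rulesetCL : Ruleset := fun d => D10 d ∧ D13 d ∧ ERule d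

/-- Ruleset N = D − {D11, D12} = {D10, D13}. -/
def rulesetN : Ruleset := fun d => D10 d ∧ D13 d

/-- Ruleset E* = {D10*, D11, D12, D13, E}. -/
def rulesetEstar : Ruleset :=
  fun d => D10star d ∧ D11 d ∧ D12 d ∧ D13 d ∧ ERule d

/-- Ruleset E′ = {D10′, D11, D12, D13, E}. -/
def rulesetEprime : Ruleset :=
  fun d => D10prime d ∧ D11 d ∧ D12 d ∧ D13 d ∧ ERule d

/-- An S-dialogue: a dialogue adhering to the particle rules and to the
    structural rules S. -/
def Legal (S : Ruleset) (d : Dialogue) : Prop := ParticleOK d ∧ S d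

/-- Extend a dialogue by one move. -/
def Dialogue.extend (d : Dialogue) (m : Move) : Dialogue :=
  ⟨d.initial, d.moves ++ [m]⟩

/-- The position about to be played. -/
def nextPos (d : Dialogue) : ℕ := d.moves.length + 1

/-- It is P's turn (the next position is even). -/
def PTurn (d : Dialogue) : Prop := nextPos d % 2 = 0

/-- The move `m` legally extends the S-dialogue `d`. -/
def LegalExt (S : Ruleset) (d : Dialogue) (m : Move) : Prop :=
  Legal S (d.extend m)

/-- `PWinningC S C d` holds when P, moving under the additional constraint
    `C` on P's own choices, has a winning strategy in the S-dialogue game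
    continuing the dialogue `d`: at P's turn, P has a legal move (satisfying
    `C`) after which P is still winning; at O's turn, every legal O-move
    leads to a position where P is winning (in particular, if no O-move is
    available, P has won: P made the last move and O cannot move). -/
inductive PWinningC (S : Ruleset) (C : Dialogue → Move → Prop) : Dialogue → Prop
  | pMove (d : Dialogue) (m : Move) (hturn : PTurn d)
      (hm : LegalExt S d m) (hC : C d m)
      (h : PWinningC S C (d.extend m)) : PWinningC S C d
  | oMoves (d : Dialogue) (hturn : ¬ PTurn d)
      (h : ∀ m, LegalExt S d m → PWinningC S C (d.extend m)) :
      PWinningC S C d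

/-- P has a winning strategy continuing the S-dialogue `d`. -/
def PWinning (S : Ruleset) (d : Dialogue) : Prop :=
  PWinningC S (fun _ _ => True) d

/-- `valid S φ` (written `⊨_S φ`): the opening assertion of φ is itself a
    legal S-dialogue and P has an S-winning strategy for φ. -/
def valid (S : Ruleset) (φ : Formula) : Prop :=
  Legal S ⟨φ, []⟩ ∧ PWinning S ⟨φ, []⟩

/-- Derivability in intuitionistic propositional logic (a Hilbert-style
    axiomatization with modus ponens). -/
inductive IProv : Formula → Prop
  | k (a b : Formula) : IProv (.imp a (.imp b a))
  | s (a b c : Formula) :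
      IProv (.imp (.imp a (.imp b c)) (.imp (.imp a b) (.imp a c)))
  | andE1 (a b : Formula) : IProv (.imp (.and a b) a)
  | andE2 (a b : Formula) : IProv (.imp (.and a b) b)
  | andI (a b : Formula) : IProv (.imp a (.imp b (.and a b)))
  | orI1 (a b : Formula) : IProv (.imp a (.or a b))
  | orI2 (a b : Formula) : IProv (.imp b (.or a b))
  | orE (a b c : Formula) :
      IProv (.imp (.imp a c) (.imp (.imp b c) (.imp (.or a b) c)))
  | negI (a b : Formula) :
      IProv (.imp (.imp a b) (.imp (.imp a (.neg b)) (.neg a)))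
  | negE (a b : Formula) : IProv (.imp (.neg a) (.imp a b))
  | mp (a b : Formula) : IProv (.imp a b) → IProv a → IProv b

/-- The stability principle ¬¬p → p for the atom `p`. -/
def stab (p : ℕ) : Formula := .imp (.neg (.neg (.atom p))) (.atom p)

/-- Stable logic: intuitionistic propositional logic plus all instances of
    the stability scheme ¬¬p → p for atoms p, closed under modus ponens. -/
inductive StableProv : Formula → Prop
  | intuit (a : Formula) : IProv a → StableProv a
  | stab (p : ℕ) : StableProv (stab p)
  | mp (a b : Formula) : StableProv (.imp a b) → StableProv a → StableProv b

/-- Boolean evaluation of a formula under a valuation of its atoms. -/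
def Formula.eval (v : ℕ → Bool) : Formula → Bool
  | .atom p => v p
  | .neg a => !(a.eval v)
  | .and a b => a.eval v && b.eval v
  | .or a b => a.eval v || b.eval v
  | .imp a b => !(a.eval v) || b.eval v

/-- A classical tautology: true under every Boolean valuation. -/
def Tautology (φ : Formula) : Prop := ∀ v, φ.eval v = true

/-- Uniform substitution of formulas for atoms, applied homomorphically. -/
def Formula.subst (σ : ℕ → Formula) : Formula → Formula
  | .atom p => σ p
  | .neg a => .neg (a.subst σ)
  | .and a b => .and (a.subst σ) (b.subst σ)
  | .or a b => .or (a.subst σ) (b.subst σ)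
  | .imp a b => .imp (a.subst σ) (b.subst σ)

/-- The atoms occurring in a formula. -/
def Formula.atoms : Formula → List ℕ
  | .atom p => [p]
  | .neg a => a.atoms
  | .and a b => a.atoms ++ b.atoms
  | .or a b => a.atoms ++ b.atoms
  | .imp a b => a.atoms ++ b.atoms

/-- Conjunction of a nonempty list of formulas. -/
def conjList (f : Formula) : List Formula → Formula
  | [] => f
  | g :: gs => .and f (conjList g gs)

/-- The conjunction (¬¬p → p) ∧ … of stability instances for the atoms
    `p :: ps`. -/
def stabConj (p : ℕ) (ps : List ℕ) : Formula :=
  conjList (stab p) (ps.map stab)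


/-! ### Auxiliary lemmas -/

theorem stmtAt_zero (d : Dialogue) : d.stmtAt 0 = some (.form d.initial) := rfl

theorem stmtAt_succ (d : Dialogue) (k : ℕ) :
    d.stmtAt (k + 1) = (d.moves[k]?).map Move.statement := by
  simp [Dialogue.stmtAt]

theorem moveAt_succ (d : Dialogue) (k : ℕ) :
    d.moveAt (k + 1) = d.moves[k]? := by
  simp [Dialogue.moveAt]

theorem moveAt_some {d : Dialogue} {n : ℕ} {m : Move} (h : d.moveAt n = some m) :
    1 ≤ n ∧ n - 1 < d.moves.length ∧ d.moves[n - 1]? = some m := by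
  rcases n with _ | k
  · simp [Dialogue.moveAt] at h
  · rw [moveAt_succ] at h
    exact ⟨by omega, by simpa using (List.getElem?_eq_some_iff.mp h).1, by simpa using h⟩

theorem stmtAt_form {d : Dialogue} {n : ℕ} {s : Statement}
    (h : d.stmtAt n = some s) (hn : n ≠ 0) :
    ∃ m, d.moveAt n = some m ∧ m.statement = s := by
  rcases n with _ | k
  · omega
  · rw [stmtAt_succ] at h
    rcases Option.map_eq_some_iff.mp h with ⟨a, ha, has⟩
    exact ⟨a, by rw [moveAt_succ]; exact ha, has⟩

theorem moveAt_extend {d : Dialogue} (m : Move) {k : ℕ} (hk : k ≤ d.moves.length) :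
    (d.extend m).moveAt k = d.moveAt k := by
  rcases k with _ | k
  · rfl
  · rw [Dialogue.extend, moveAt_succ, moveAt_succ]
    exact List.getElem?_append_left (by omega)

theorem stmtAt_extend {d : Dialogue} (m : Move) {k : ℕ} (hk : k ≤ d.moves.length) :
    (d.extend m).stmtAt k = d.stmtAt k := by
  rcases k with _ | k
  · rfl
  · rw [stmtAt_succ, stmtAt_succ, Dialogue.extend]
    rw [List.getElem?_append_left (by omega)]

theorem moveAt_extend_last (d : Dialogue) (m : Move) :
    (d.extend m).moveAt (d.moves.length + 1) = some m := by
  rw [Dialogue.extend, moveAt_succ]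
  exact List.getElem?_concat_length

theorem stmtAt_extend_last (d : Dialogue) (m : Move) :
    (d.extend m).stmtAt (d.moves.length + 1) = some m.statement := by
  rw [Dialogue.extend, stmtAt_succ, List.getElem?_concat_length]; rfl

theorem moveAt_extend_inv {d : Dialogue} {m m' : Move} {k : ℕ}
    (h : (d.extend m).moveAt k = some m') :
    (k ≤ d.moves.length ∧ d.moveAt k = some m') ∨
      (k = d.moves.length + 1 ∧ m' = m) := by
  rcases moveAt_some h with ⟨h1, h2, h3⟩
  rw [Dialogue.extend] at h2 h3
  simp at h2
  by_cases hk : k ≤ d.moves.length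
  · left
    refine ⟨hk, ?_⟩
    rw [← moveAt_extend m hk]
    exact h
  · right
    have hk1 : k = d.moves.length + 1 := by omega
    subst hk1
    simp [List.getElem?_concat_length] at h3
    exact ⟨rfl, h3.symm⟩

theorem stmtAt_extend_inv {d : Dialogue} {m : Move} {s : Statement} {k : ℕ}
    (h : (d.extend m).stmtAt k = some s) :
    (k ≤ d.moves.length ∧ d.stmtAt k = some s) ∨
      (k = d.moves.length + 1 ∧ s = m.statement) := by
  by_cases hk : k ≤ d.moves.length
  · left; refine ⟨hk, ?_⟩; rw [← stmtAt_extend m hk]; exact h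
  · rcases k with _ | k
    · omega
    rw [stmtAt_succ, Dialogue.extend] at h
    by_cases hk1 : k = d.moves.length
    · subst hk1
      rw [List.getElem?_concat_length] at h
      simp at h
      exact Or.inr ⟨rfl, h.symm⟩
    · exfalso
      rw [List.getElem?_eq_none (by simp; omega)] at h
      simp at h
theorem moveOK_ref_lt {d : Dialogue} (hd : ParticleOK d) {n : ℕ} {a : Move}
    (h : d.moveAt n = some a) : a.ref < n := by
  rcases moveAt_some h with ⟨h1, h2, h3⟩
  have := hd (n - 1) a (by simpa using h3)
  have hn : n - 1 + 1 = n := by omega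
  rw [hn] at this
  exact this.1

theorem moveOK_extend {d : Dialogue} (hd : ParticleOK d) (m : Move) {n : ℕ} {m' : Move}
    (hn : n ≤ d.moves.length) (h : MoveOK d n m') : MoveOK (d.extend m) n m' := by
  obtain ⟨h1, h2, h3, h4⟩ := h
  refine ⟨h1, h2, ?_, ?_⟩
  · intro ha
    obtain ⟨ψ, hψ, hatt⟩ := h3 ha
    exact ⟨ψ, by rw [stmtAt_extend m (by omega)]; exact hψ, hatt⟩
  · intro ha
    obtain ⟨a, χ, hma, haa, hsa, hdef⟩ := h4 ha
    have haref : a.ref < m'.ref := moveOK_ref_lt hd hma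
    refine ⟨a, χ, ?_, haa, ?_, hdef⟩
    · rw [moveAt_extend m (by omega)]; exact hma
    · rw [stmtAt_extend m (by omega)]; exact hsa

theorem particleOK_extend {d : Dialogue} {m : Move} (hd : ParticleOK d)
    (hm : MoveOK (d.extend m) (d.moves.length + 1) m) : ParticleOK (d.extend m) := by
  intro i m' h
  rw [Dialogue.extend] at h
  by_cases hi : i < d.moves.length
  · rw [List.getElem?_append_left hi] at h
    exact moveOK_extend hd m (by omega) (hd i m' h)
  · by_cases hi2 : i = d.moves.length
    · subst hi2
      rw [List.getElem?_concat_length] at h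
      cases h
      exact hm
    · rw [List.getElem?_eq_none (by simp; omega)] at h
      cases h

theorem D10_extend_odd {d : Dialogue} {m : Move} (h10 : D10 d)
    (hodd : (d.moves.length + 1) % 2 = 1) : D10 (d.extend m) := by
  intro n q hn hs
  rcases stmtAt_extend_inv hs with ⟨hk, hs'⟩ | ⟨hk, _⟩
  · obtain ⟨j, hj1, hj2, hj3⟩ := h10 n q hn hs'
    exact ⟨j, hj1, hj2, by rw [stmtAt_extend m (by omega)]; exact hj3⟩
  · omega

theorem isAttackOn_extend_inv {d : Dialogue} {m : Move} {n r : ℕ}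
    (h : IsAttackOn (d.extend m) n r) :
    IsAttackOn d n r ∨ (n = d.moves.length + 1 ∧ m.isAttack = true ∧ m.ref = r) := by
  obtain ⟨m', hm', ha, hr⟩ := h
  rcases moveAt_extend_inv hm' with ⟨hk, hmm⟩ | ⟨hk, hmm⟩
  · exact Or.inl ⟨m', hmm, ha, hr⟩
  · subst hmm; exact Or.inr ⟨hk, ha, hr⟩

theorem D13_extend_defense {d : Dialogue} {m : Move} (h13 : D13 d)
    (hm : m.isAttack = false) : D13 (d.extend m) := by
  intro n₁ n₂ r hr h1 h2
  rcases isAttackOn_extend_inv h1 with h1 | ⟨_, ha, _⟩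
  · rcases isAttackOn_extend_inv h2 with h2 | ⟨_, ha, _⟩
    · exact h13 n₁ n₂ r hr h1 h2
    · rw [hm] at ha; cases ha
  · rw [hm] at ha; cases ha

theorem isAttackOn_ref_lt {d : Dialogue} (hd : ParticleOK d) {n r : ℕ}
    (h : IsAttackOn d n r) : r < n ∧ n ≤ d.moves.length := by
  obtain ⟨m', hm', _, hr⟩ := h
  rcases moveAt_some hm' with ⟨h1, h2, _⟩
  subst hr
  exact ⟨moveOK_ref_lt hd hm', by omega⟩

theorem D13_extend_attack_last {d : Dialogue} {m : Move} (h13 : D13 d)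
    (hd : ParticleOK d) (hm : m.ref = d.moves.length) : D13 (d.extend m) := by
  intro n₁ n₂ r hr h1 h2
  rcases isAttackOn_extend_inv h1 with h1 | ⟨hn1, _, hr1⟩ <;>
    rcases isAttackOn_extend_inv h2 with h2 | ⟨hn2, _, hr2⟩
  · exact h13 n₁ n₂ r hr h1 h2
  · exfalso
    have := isAttackOn_ref_lt hd h1
    omega
  · exfalso
    have := isAttackOn_ref_lt hd h2
    omega
  · omega
theorem moveOK_last {S : Ruleset} {d : Dialogue} {m : Move} (h : Legal S (d.extend m)) :
    MoveOK (d.extend m) (d.moves.length + 1) m :=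
  h.1 d.moves.length m (by rw [Dialogue.extend]; exact List.getElem?_concat_length)

section Part1

variable (p : ℕ)

private def φ1 : Formula := .imp (.atom p) (.neg (.neg (.atom p)))
private def M1 : Move := ⟨.form (.atom p), true, 0⟩
private def M2 : Move := ⟨.form (.neg (.neg (.atom p))), false, 1⟩
private def M3 : Move := ⟨.form (.neg (.atom p)), true, 2⟩
private def M4 : Move := ⟨.form (.atom p), true, 3⟩

private theorem legal_d0 : Legal rulesetN ⟨φ1 p, []⟩ := by
  refine ⟨?_, ?_, ?_⟩
  · intro i m h
    simp [List.getElem?_eq_none] at h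
  · intro n q hn hs
    rcases n with _ | k
    · simp [Dialogue.stmtAt, φ1] at hs
    · rw [stmtAt_succ] at hs
      simp at hs
  · intro n₁ n₂ r hr h1 h2
    obtain ⟨m', hm', _, _⟩ := h1
    rcases moveAt_some hm' with ⟨_, h2, _⟩
    simp at h2

private theorem forced1 (m : Move)
    (hm : LegalExt rulesetN ⟨φ1 p, []⟩ m) : m = M1 p := by
  have hOK := moveOK_last hm
  obtain ⟨h1, h2, h3, h4⟩ := hOK
  rcases m with ⟨s, b, r⟩
  simp only [List.length_nil] at h1 h2 h3 h4 ⊢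
  have hr : r = 0 := by simp at h1; omega
  subst hr
  cases b
  · obtain ⟨a, χ, hma, _⟩ := h4 rfl
    simp [Dialogue.moveAt] at hma
  · obtain ⟨ψ, hψ, hatt⟩ := h3 rfl
    have : ψ = φ1 p := by
      simp [Dialogue.stmtAt] at hψ
      exact hψ.symm
    subst this
    cases hatt
    rfl

end Part1
private theorem moveOK_attack {d : Dialogue} {n : ℕ} {s : Statement} {r : ℕ}
    (hr : r < n) (hpar : r % 2 ≠ n % 2) {ψ : Formula}
    (hψ : d.stmtAt r = some (.form ψ)) (hatt : Attacks s ψ) :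
    MoveOK d n ⟨s, true, r⟩ :=
  ⟨hr, hpar, fun _ => ⟨ψ, hψ, hatt⟩, fun hb => by simp at hb⟩

private theorem moveOK_defense {d : Dialogue} {n : ℕ} {s : Statement} {r : ℕ}
    (hr : r < n) (hpar : r % 2 ≠ n % 2) {a : Move} {χ : Formula}
    (ha : d.moveAt r = some a) (haa : a.isAttack = true)
    (hχ : d.stmtAt a.ref = some (.form χ)) (hdef : Defends χ a.statement s) :
    MoveOK d n ⟨s, false, r⟩ :=
  ⟨hr, hpar, fun hb => by simp at hb, fun _ => ⟨a, χ, ha, haa, hχ, hdef⟩⟩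

section Part1b

variable (p : ℕ)

private theorem legal_d2 : Legal rulesetN ⟨φ1 p, [M1 p, M2 p]⟩ := by
  refine ⟨?_, ?_, ?_⟩
  · intro i m h
    match i, h with
    | 0, h =>
      obtain rfl : m = M1 p := by simpa using h.symm
      exact moveOK_attack (by omega) (by omega) rfl (Attacks.imp _ _)
    | 1, h =>
      obtain rfl : m = M2 p := by simpa using h.symm
      exact moveOK_defense (by omega) (by omega) (a := M1 p) rfl rfl rfl (Defends.imp _ _)
    | (n+2), h => simp [List.getElem?_eq_none] at h
  · intro n q hn hs
    match n, hs with
    | 0, hs => simp [Dialogue.stmtAt, φ1] at hs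
    | 1, hs => omega
    | 2, hs => simp [Dialogue.stmtAt, M2] at hs
    | (n+3), hs => rw [stmtAt_succ] at hs; simp [List.getElem?_eq_none] at hs
  · intro n₁ n₂ r hr h1 h2
    have key : ∀ n, IsAttackOn ⟨φ1 p, [M1 p, M2 p]⟩ n r → n = 1 := by
      intro n hn
      obtain ⟨m', hm', ha, _⟩ := hn
      rcases moveAt_some hm' with ⟨hx1, hx2, hx3⟩
      match n, hx3 with
      | 1, hx3 => rfl
      | 2, hx3 =>
        obtain rfl : m' = M2 p := by simpa using hx3.symm
        simp [M2] at ha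
    rw [key n₁ h1, key n₂ h2]

private theorem forced3 (m : Move)
    (hm : LegalExt rulesetN ⟨φ1 p, [M1 p, M2 p]⟩ m) : m = M3 p := by
  have hOK := moveOK_last hm
  obtain ⟨h1, h2, h3, h4⟩ := hOK
  rcases m with ⟨s, b, r⟩
  simp only [List.length_cons, List.length_nil] at h1 h2 h3 h4 ⊢
  have hr : r = 0 ∨ r = 2 := by omega
  cases b
  · obtain ⟨a, χ, hma, haa, _, _⟩ := h4 rfl
    rcases hr with rfl | rfl
    · simp [Dialogue.moveAt] at hma
    · obtain rfl : a = M2 p := by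
        have := (moveAt_extend (d := ⟨φ1 p, [M1 p, M2 p]⟩) _ (k := 2) (by simp)).symm.trans hma
        simpa [Dialogue.moveAt] using this.symm
      simp [M2] at haa
  · obtain ⟨ψ, hψ, hatt⟩ := h3 rfl
    rcases hr with rfl | rfl
    · exfalso
      have h13 := hm.2.2
      have e1 : IsAttackOn (Dialogue.extend ⟨φ1 p, [M1 p, M2 p]⟩ ⟨s, true, 0⟩) 1 0 :=
        ⟨M1 p, by simp [Dialogue.moveAt, Dialogue.extend], rfl, rfl⟩
      have e3 : IsAttackOn (Dialogue.extend ⟨φ1 p, [M1 p, M2 p]⟩ ⟨s, true, 0⟩) 3 0 :=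
        ⟨⟨s, true, 0⟩, by exact moveAt_extend_last _ _, rfl, rfl⟩
      have := h13 1 3 0 rfl e1 e3
      omega
    · have hψ' : ψ = .neg (.neg (.atom p)) := by
        have := (stmtAt_extend (d := ⟨φ1 p, [M1 p, M2 p]⟩) _ (k := 2) (by simp)).symm.trans hψ
        simpa [Dialogue.stmtAt, M2] using this.symm
      subst hψ'
      cases hatt
      rfl

private theorem legal_d4 : Legal rulesetN ⟨φ1 p, [M1 p, M2 p, M3 p, M4 p]⟩ := by
  refine ⟨?_, ?_, ?_⟩
  · intro i m h
    match i, h with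
    | 0, h =>
      obtain rfl : m = M1 p := by simpa using h.symm
      exact moveOK_attack (by omega) (by omega) rfl (Attacks.imp _ _)
    | 1, h =>
      obtain rfl : m = M2 p := by simpa using h.symm
      exact moveOK_defense (by omega) (by omega) (a := M1 p) rfl rfl rfl (Defends.imp _ _)
    | 2, h =>
      obtain rfl : m = M3 p := by simpa using h.symm
      exact moveOK_attack (by omega) (by omega) rfl (Attacks.neg _)
    | 3, h =>
      obtain rfl : m = M4 p := by simpa using h.symm
      exact moveOK_attack (by omega) (by omega) rfl (Attacks.neg _)
    | (n+4), h => simp [List.getElem?_eq_none] at h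
  · intro n q hn hs
    match n, hs with
    | 0, hs => simp [Dialogue.stmtAt, φ1] at hs
    | 1, hs => omega
    | 2, hs => simp [Dialogue.stmtAt, M2] at hs
    | 3, hs => omega
    | 4, hs =>
      refine ⟨1, by omega, by omega, ?_⟩
      simp [Dialogue.stmtAt, M1, M4] at hs ⊢
      exact hs
    | (n+5), hs => rw [stmtAt_succ] at hs; simp [List.getElem?_eq_none] at hs
  · intro n₁ n₂ r hr h1 h2
    have key : ∀ n, IsAttackOn ⟨φ1 p, [M1 p, M2 p, M3 p, M4 p]⟩ n r →
        (n = 1 ∧ r = 0) ∨ (n = 3 ∧ r = 2) ∨ (n = 4 ∧ r = 3) := by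
      intro n hn
      obtain ⟨m', hm', ha, hr'⟩ := hn
      rcases moveAt_some hm' with ⟨hx1, hx2, hx3⟩
      match n, hx3 with
      | 1, hx3 =>
        obtain rfl : m' = M1 p := by simpa using hx3.symm
        simp [M1] at hr'
        exact Or.inl ⟨rfl, hr'.symm⟩
      | 2, hx3 =>
        obtain rfl : m' = M2 p := by simpa using hx3.symm
        simp [M2] at ha
      | 3, hx3 =>
        obtain rfl : m' = M3 p := by simpa using hx3.symm
        simp [M3] at hr'
        exact Or.inr (Or.inl ⟨rfl, hr'.symm⟩)
      | 4, hx3 =>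
        obtain rfl : m' = M4 p := by simpa using hx3.symm
        simp [M4] at hr'
        exact Or.inr (Or.inr ⟨rfl, hr'.symm⟩)
    rcases key n₁ h1 with ⟨e1, f1⟩ | ⟨e1, f1⟩ | ⟨e1, f1⟩ <;>
      rcases key n₂ h2 with ⟨e2, f2⟩ | ⟨e2, f2⟩ | ⟨e2, f2⟩ <;> omega

private theorem no_move5 (m : Move)
    (hm : LegalExt rulesetN ⟨φ1 p, [M1 p, M2 p, M3 p, M4 p]⟩ m) : False := by
  have hOK := moveOK_last hm
  obtain ⟨h1, h2, h3, h4⟩ := hOK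
  rcases m with ⟨s, b, r⟩
  simp only [List.length_cons, List.length_nil] at h1 h2 h3 h4
  have hr : r = 0 ∨ r = 2 ∨ r = 4 := by omega
  cases b
  · obtain ⟨a, χ, hma, haa, hsa, hdef⟩ := h4 rfl
    rcases hr with rfl | rfl | rfl
    · simp [Dialogue.moveAt] at hma
    · obtain rfl : a = M2 p := by
        have := (moveAt_extend (d := ⟨φ1 p, [M1 p, M2 p, M3 p, M4 p]⟩) _ (k := 2)
          (by simp)).symm.trans hma
        simpa [Dialogue.moveAt] using this.symm
      simp [M2] at haa
    · obtain rfl : a = M4 p := by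
        have := (moveAt_extend (d := ⟨φ1 p, [M1 p, M2 p, M3 p, M4 p]⟩) _ (k := 4)
          (by simp)).symm.trans hma
        simpa [Dialogue.moveAt] using this.symm
      have hχ : χ = .neg (.atom p) := by
        have := (stmtAt_extend (d := ⟨φ1 p, [M1 p, M2 p, M3 p, M4 p]⟩) _ (k := (M4 p).ref)
          (by simp [M4])).symm.trans hsa
        simpa [Dialogue.stmtAt, M3, M4] using this.symm
      subst hχ
      cases hdef
  · obtain ⟨ψ, hψ, hatt⟩ := h3 rfl
    have h13 := hm.2.2
    rcases hr with rfl | rfl | rfl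
    · have e1 : IsAttackOn (Dialogue.extend ⟨φ1 p, [M1 p, M2 p, M3 p, M4 p]⟩ ⟨s, true, 0⟩) 1 0 :=
        ⟨M1 p, by simp [Dialogue.moveAt, Dialogue.extend], rfl, rfl⟩
      have e5 : IsAttackOn (Dialogue.extend ⟨φ1 p, [M1 p, M2 p, M3 p, M4 p]⟩ ⟨s, true, 0⟩) 5 0 :=
        ⟨⟨s, true, 0⟩, by exact moveAt_extend_last _ _, rfl, rfl⟩
      have := h13 1 5 0 rfl e1 e5
      omega
    · have e3 : IsAttackOn (Dialogue.extend ⟨φ1 p, [M1 p, M2 p, M3 p, M4 p]⟩ ⟨s, true, 2⟩) 3 2 :=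
        ⟨M3 p, by simp [Dialogue.moveAt, Dialogue.extend], rfl, rfl⟩
      have e5 : IsAttackOn (Dialogue.extend ⟨φ1 p, [M1 p, M2 p, M3 p, M4 p]⟩ ⟨s, true, 2⟩) 5 2 :=
        ⟨⟨s, true, 2⟩, by exact moveAt_extend_last _ _, rfl, rfl⟩
      have := h13 3 5 2 rfl e3 e5
      omega
    · have hψ' : ψ = .atom p := by
        have := (stmtAt_extend (d := ⟨φ1 p, [M1 p, M2 p, M3 p, M4 p]⟩) _ (k := 4)
          (by simp)).symm.trans hψ
        simpa [Dialogue.stmtAt, M4] using this.symm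
      subst hψ'
      cases hatt

theorem part1_valid : valid rulesetN (.imp (.atom p) (.neg (.neg (.atom p)))) := by
  refine ⟨legal_d0 p, ?_⟩
  apply PWinningC.oMoves
  · simp [PTurn, nextPos]
  intro m hm
  obtain rfl := forced1 p m hm
  apply PWinningC.pMove _ (M2 p)
  · simp [PTurn, nextPos, Dialogue.extend]
  · exact legal_d2 p
  · trivial
  apply PWinningC.oMoves
  · simp [PTurn, nextPos, Dialogue.extend]
  intro m hm
  obtain rfl := forced3 p m hm
  apply PWinningC.pMove _ (M4 p)
  · simp [PTurn, nextPos, Dialogue.extend]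
  · exact legal_d4 p
  · trivial
  apply PWinningC.oMoves
  · simp [PTurn, nextPos, Dialogue.extend]
  intro m hm
  exact (no_move5 p m hm).elim

end Part1b
section Part2

variable (p : ℕ)

private def Af : Formula := .and (.atom p) (.atom p)
private def ψ2 : Formula := .imp (Af p) (.neg (.neg (Af p)))

/-- There is a P-attack `∧L`/`∧R` on an O-assertion of `p ∧ p`; O can then
    defend it (asserting `p`) forever, since D12 is absent from N. -/
private def W (d : Dialogue) : Prop :=
  ∃ r a, d.moveAt r = some a ∧ r % 2 = 0 ∧ a.isAttack = true ∧
    (a.statement = .andL ∨ a.statement = .andR) ∧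
    d.stmtAt a.ref = some (.form (Af p))

private def Inv (d : Dialogue) : Prop :=
  d.initial = ψ2 p ∧ Legal rulesetN d ∧
  (∀ i m, d.moves[i]? = some m → (i + 1) % 2 = 1 →
    (m.statement = .form (Af p) ∨ m.statement = .form (.neg (Af p)) ∨
     m.statement = .form (.atom p) ∨ m.statement = .andL)) ∧
  (∀ i m, d.moves[i]? = some m → (i + 1) % 2 = 0 →
    (m.statement = .form (.neg (.neg (Af p))) ∨ m.statement = .form (Af p) ∨
     m.statement = .form (.atom p) ∨ m.statement = .andL ∨ m.statement = .andR)) ∧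
  (∀ i m, d.moves[i]? = some m → (i + 1) % 2 = 1 →
    m.statement = .form (.atom p) → W p d)

private theorem W_extend {d : Dialogue} (hd : ParticleOK d) (m : Move)
    (hW : W p d) : W p (d.extend m) := by
  obtain ⟨r, a, hma, hre, haa, hst, hsa⟩ := hW
  have hr : r ≤ d.moves.length := by
    rcases moveAt_some hma with ⟨x1, x2, _⟩; omega
  have haref : a.ref < r := moveOK_ref_lt hd hma
  exact ⟨r, a, by rw [moveAt_extend m hr]; exact hma, hre, haa, hst,
    by rw [stmtAt_extend m (by omega)]; exact hsa⟩

private theorem inv_oStmt {d : Dialogue} (hI : Inv p d) {j : ℕ} (hj : j % 2 = 1)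
    {s : Statement} (hs : d.stmtAt j = some s) :
    s = .form (Af p) ∨ s = .form (.neg (Af p)) ∨ s = .form (.atom p) ∨ s = .andL := by
  obtain ⟨mo, hmo, rfl⟩ := stmtAt_form hs (by omega)
  rcases moveAt_some hmo with ⟨x1, x2, x3⟩
  exact hI.2.2.1 (j - 1) mo x3 (by omega)

private theorem inv_pStmt {d : Dialogue} (hI : Inv p d) {j : ℕ} (hj : j % 2 = 0)
    (hj0 : j ≠ 0) {s : Statement} (hs : d.stmtAt j = some s) :
    s = .form (.neg (.neg (Af p))) ∨ s = .form (Af p) ∨ s = .form (.atom p) ∨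
      s = .andL ∨ s = .andR := by
  obtain ⟨mo, hmo, rfl⟩ := stmtAt_form hs hj0
  rcases moveAt_some hmo with ⟨x1, x2, x3⟩
  exact hI.2.2.2.1 (j - 1) mo x3 (by omega)

private theorem invP {d : Dialogue} {m : Move} (hI : Inv p d) (hturn : PTurn d)
    (hm : LegalExt rulesetN d m) : Inv p (d.extend m) := by
  obtain ⟨hinit, hleg, hSO, hSP, hS2⟩ := hI
  have hIfull : Inv p d := ⟨hinit, hleg, hSO, hSP, hS2⟩
  have heven : (d.moves.length + 1) % 2 = 0 := hturn
  have hd : ParticleOK d := hleg.1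
  obtain ⟨h1, h2, h3, h4⟩ := moveOK_last hm
  refine ⟨hinit, hm, ?_, ?_, ?_⟩
  · -- O statements unchanged
    intro i m' h hodd
    rw [Dialogue.extend] at h
    by_cases hi : i < d.moves.length
    · rw [List.getElem?_append_left hi] at h; exact hSO i m' h hodd
    · have hi2 : i = d.moves.length := by
        by_contra hne
        rw [List.getElem?_eq_none (by simp; omega)] at h; cases h
      omega
  · -- classify the new P statement
    intro i m' h hevn
    rw [Dialogue.extend] at h
    by_cases hi : i < d.moves.length
    · rw [List.getElem?_append_left hi] at h; exact hSP i m' h hevn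
    · have hi2 : i = d.moves.length := by
        by_contra hne
        rw [List.getElem?_eq_none (by simp; omega)] at h; cases h
      subst hi2
      rw [List.getElem?_concat_length] at h
      cases h
      have hrle : m.ref ≤ d.moves.length := by omega
      have hrodd : m.ref % 2 = 1 := by omega
      cases hb : m.isAttack
      · -- defense
        obtain ⟨a, χ, hma, haa, hsa, hdef⟩ := h4 hb
        rw [moveAt_extend m hrle] at hma
        rcases moveAt_some hma with ⟨x1, x2, x3⟩
        have hOset := hSO (m.ref - 1) a x3 (by omega)
        have hOKa := hd (m.ref - 1) a x3
        rw [Nat.sub_add_cancel x1] at hOKa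
        have haref : a.ref ≤ d.moves.length := by
          have := hOKa.1; omega
        rw [stmtAt_extend m haref] at hsa
        have harefeven : a.ref % 2 = 0 := by
          have := hOKa.2.1; omega
        generalize hms : m.statement = s at hdef ⊢
        by_cases h0 : a.ref = 0
        · rw [h0, stmtAt_zero, hinit] at hsa
          have hχ : χ = ψ2 p := by
            simp only [Option.some_inj] at hsa
            cases hsa; rfl
          subst hχ
          rw [ψ2] at hdef
          rcases hOset with ha' | ha' | ha' | ha' <;> rw [ha'] at hdef <;>
            try rw [Af] at hdef
          all_goals cases hdef
          · exact Or.inl rfl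
        · rcases inv_pStmt p hIfull harefeven h0 hsa with hχ | hχ | hχ | hχ | hχ <;>
            [skip; skip; skip; exact absurd hχ (by simp); exact absurd hχ (by simp)]
          all_goals
            injection hχ with hχ
            subst hχ
          all_goals rcases hOset with ha' | ha' | ha' | ha' <;> rw [ha'] at hdef
          all_goals try rw [Af] at hdef
          all_goals cases hdef
          all_goals simp [Af]
      · -- attack
        obtain ⟨χ, hχ, hatt⟩ := h3 hb
        rw [stmtAt_extend m hrle] at hχ
        generalize hms : m.statement = s at hatt ⊢
        rcases inv_oStmt p hIfull hrodd hχ with hχ' | hχ' | hχ' | hχ' <;>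
          [skip; skip; skip; exact absurd hχ' (by simp)]
        all_goals injection hχ' with hχ'; subst hχ'
        · rw [Af] at hatt
          cases hatt
          · exact Or.inr (Or.inr (Or.inr (Or.inl rfl)))
          · exact Or.inr (Or.inr (Or.inr (Or.inr rfl)))
        · cases hatt
          exact Or.inr (Or.inl rfl)
        · cases hatt
  · -- W-link
    intro i m' h hodd
    rw [Dialogue.extend] at h
    by_cases hi : i < d.moves.length
    · rw [List.getElem?_append_left hi] at h
      intro hp
      exact W_extend p hd m (hS2 i m' h hodd hp)
    · have hi2 : i = d.moves.length := by
        by_contra hne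
        rw [List.getElem?_eq_none (by simp; omega)] at h; cases h
      omega

end Part2
section Part2b

variable (p : ℕ)

private theorem invO {d : Dialogue} (hI : Inv p d) (hturn : ¬ PTurn d) :
    ∃ m, LegalExt rulesetN d m ∧ Inv p (d.extend m) := by
  obtain ⟨hinit, hleg, hSO, hSP, hS2⟩ := hI
  have hIfull : Inv p d := ⟨hinit, hleg, hSO, hSP, hS2⟩
  have hodd : (d.moves.length + 1) % 2 = 1 := by
    simp only [PTurn, nextPos] at hturn; omega
  have hd : ParticleOK d := hleg.1
  by_cases hW : W p d
  · -- O defends the standing ∧-attack by asserting p, forever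
    obtain ⟨r, a, hma, hre, haa, hst, hsa⟩ := hW
    have hr : r ≤ d.moves.length := by
      rcases moveAt_some hma with ⟨x1, x2, _⟩; omega
    have haref : a.ref < r := moveOK_ref_lt hd hma
    refine ⟨⟨.form (.atom p), false, r⟩, ?_, ?_⟩
    · refine ⟨particleOK_extend hd ?_, D10_extend_odd hleg.2.1 hodd,
        D13_extend_defense hleg.2.2 rfl⟩
      refine moveOK_defense (by omega) (by omega)
        (by rw [moveAt_extend _ hr]; exact hma) haa
        (by rw [stmtAt_extend _ (by omega)]; exact hsa) ?_
      rcases hst with hst | hst <;> rw [hst]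
      · exact Defends.andL _ _
      · exact Defends.andR _ _
    · have hWext : W p (Dialogue.extend d ⟨.form (.atom p), false, r⟩) :=
        W_extend p hd _ ⟨r, a, hma, hre, haa, hst, hsa⟩
      refine ⟨hinit, ?_, ?_, ?_, ?_⟩
      · refine ⟨particleOK_extend hd ?_, D10_extend_odd hleg.2.1 hodd,
          D13_extend_defense hleg.2.2 rfl⟩
        refine moveOK_defense (by omega) (by omega)
          (by rw [moveAt_extend _ hr]; exact hma) haa
          (by rw [stmtAt_extend _ (by omega)]; exact hsa) ?_
        rcases hst with hst | hst <;> rw [hst]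
        · exact Defends.andL _ _
        · exact Defends.andR _ _
      · intro i m' h ho
        rw [Dialogue.extend] at h
        by_cases hi : i < d.moves.length
        · rw [List.getElem?_append_left hi] at h; exact hSO i m' h ho
        · have hi2 : i = d.moves.length := by
            by_contra hne
            rw [List.getElem?_eq_none (by simp; omega)] at h; cases h
          subst hi2
          rw [List.getElem?_concat_length] at h
          cases h
          exact Or.inr (Or.inr (Or.inl rfl))
      · intro i m' h he
        rw [Dialogue.extend] at h
        by_cases hi : i < d.moves.length
        · rw [List.getElem?_append_left hi] at h; exact hSP i m' h he
        · have hi2 : i = d.moves.length := by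
            by_contra hne
            rw [List.getElem?_eq_none (by simp; omega)] at h; cases h
          omega
      · intro i m' h ho hp
        exact hWext
  · -- no standing ∧-attack
    rcases Nat.eq_zero_or_pos d.moves.length with hlen | hlen
    · -- first move: O attacks the implication, asserting p ∧ p
      have hmOK : MoveOK (d.extend ⟨.form (Af p), true, 0⟩)
          (d.moves.length + 1) ⟨.form (Af p), true, 0⟩ := by
        refine moveOK_attack (by omega) (by omega) (ψ := ψ2 p) ?_ ?_
        · simp [Dialogue.stmtAt, Dialogue.extend, hinit]
        · rw [ψ2]; exact Attacks.imp _ _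
      refine ⟨⟨.form (Af p), true, 0⟩, ?_, ?_⟩
      · exact ⟨particleOK_extend hd hmOK, D10_extend_odd hleg.2.1 hodd,
          D13_extend_attack_last hleg.2.2 hd (by simp [hlen])⟩
      · refine ⟨hinit, ⟨particleOK_extend hd hmOK, D10_extend_odd hleg.2.1 hodd,
          D13_extend_attack_last hleg.2.2 hd (by simp [hlen])⟩, ?_, ?_, ?_⟩
        · intro i m' h ho
          rw [Dialogue.extend] at h
          by_cases hi : i < d.moves.length
          · rw [List.getElem?_append_left hi] at h; exact hSO i m' h ho
          · have hi2 : i = d.moves.length := by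
              by_contra hne
              rw [List.getElem?_eq_none (by simp; omega)] at h; cases h
            subst hi2
            rw [List.getElem?_concat_length] at h
            cases h
            exact Or.inl rfl
        · intro i m' h he
          rw [Dialogue.extend] at h
          by_cases hi : i < d.moves.length
          · rw [List.getElem?_append_left hi] at h; exact hSP i m' h he
          · have hi2 : i = d.moves.length := by
              by_contra hne
              rw [List.getElem?_eq_none (by simp; omega)] at h; cases h
            omega
        · intro i m' h ho hp
          rw [Dialogue.extend] at h
          by_cases hi : i < d.moves.length
          · rw [List.getElem?_append_left hi] at h
            exact W_extend p hd _ (hS2 i m' h ho hp)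
          · have hi2 : i = d.moves.length := by
              by_contra hne
              rw [List.getElem?_eq_none (by simp; omega)] at h; cases h
            subst hi2
            rw [List.getElem?_concat_length] at h
            cases h
            rw [Af] at hp
            simp at hp
    · -- respond to P's last move
      set L := d.moves.length with hL
      have hm₀ : d.moves[L - 1]? = some (d.moves[L - 1]'(by omega)) :=
        List.getElem?_eq_getElem (by omega)
      set m₀ := d.moves[L - 1]'(by omega) with hm₀def
      have heven : L % 2 = 0 := by omega
      have hPset := hSP (L - 1) m₀ hm₀ (by omega)
      have hOKm₀ := hd (L - 1) m₀ hm₀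
      rw [Nat.sub_add_cancel (by omega)] at hOKm₀
      have hstL : d.stmtAt L = some m₀.statement := by
        have h' := stmtAt_succ d (L - 1)
        rw [Nat.sub_add_cancel (by omega)] at h'
        rw [h', hm₀]
        rfl
      rcases hPset with hst | hst | hst | hst | hst
      · -- P asserted ¬¬(p∧p): O attacks it with ¬(p∧p)
        rw [hst] at hstL
        have hmOK : MoveOK (d.extend ⟨.form (.neg (Af p)), true, L⟩)
            (d.moves.length + 1) ⟨.form (.neg (Af p)), true, L⟩ := by
          refine moveOK_attack (by omega) (by omega)
            (by rw [stmtAt_extend _ (by omega)]; exact hstL) ?_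
          exact Attacks.neg _
        refine ⟨⟨.form (.neg (Af p)), true, L⟩, ?_, ?_⟩
        · exact ⟨particleOK_extend hd hmOK, D10_extend_odd hleg.2.1 hodd,
            D13_extend_attack_last hleg.2.2 hd rfl⟩
        · refine ⟨hinit, ⟨particleOK_extend hd hmOK, D10_extend_odd hleg.2.1 hodd,
            D13_extend_attack_last hleg.2.2 hd rfl⟩, ?_, ?_, ?_⟩
          · intro i m' h ho
            rw [Dialogue.extend] at h
            by_cases hi : i < d.moves.length
            · rw [List.getElem?_append_left hi] at h; exact hSO i m' h ho
            · have hi2 : i = d.moves.length := by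
                by_contra hne
                rw [List.getElem?_eq_none (by simp; omega)] at h; cases h
              subst hi2
              rw [List.getElem?_concat_length] at h
              cases h
              exact Or.inr (Or.inl rfl)
          · intro i m' h he
            rw [Dialogue.extend] at h
            by_cases hi : i < d.moves.length
            · rw [List.getElem?_append_left hi] at h; exact hSP i m' h he
            · have hi2 : i = d.moves.length := by
                by_contra hne
                rw [List.getElem?_eq_none (by simp; omega)] at h; cases h
              omega
          · intro i m' h ho hp
            rw [Dialogue.extend] at h
            by_cases hi : i < d.moves.length
            · rw [List.getElem?_append_left hi] at h
              exact W_extend p hd _ (hS2 i m' h ho hp)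
            · have hi2 : i = d.moves.length := by
                by_contra hne
                rw [List.getElem?_eq_none (by simp; omega)] at h; cases h
              subst hi2
              rw [List.getElem?_concat_length] at h
              cases h
              simp at hp
      · -- P asserted p∧p: O attacks it with ∧L
        rw [hst] at hstL
        have hmOK : MoveOK (d.extend ⟨.andL, true, L⟩)
            (d.moves.length + 1) ⟨.andL, true, L⟩ := by
          refine moveOK_attack (by omega) (by omega)
            (by rw [stmtAt_extend _ (by omega)]; exact hstL) ?_
          rw [Af]; exact Attacks.andL _ _
        refine ⟨⟨.andL, true, L⟩, ?_, ?_⟩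
        · exact ⟨particleOK_extend hd hmOK, D10_extend_odd hleg.2.1 hodd,
            D13_extend_attack_last hleg.2.2 hd rfl⟩
        · refine ⟨hinit, ⟨particleOK_extend hd hmOK, D10_extend_odd hleg.2.1 hodd,
            D13_extend_attack_last hleg.2.2 hd rfl⟩, ?_, ?_, ?_⟩
          · intro i m' h ho
            rw [Dialogue.extend] at h
            by_cases hi : i < d.moves.length
            · rw [List.getElem?_append_left hi] at h; exact hSO i m' h ho
            · have hi2 : i = d.moves.length := by
                by_contra hne
                rw [List.getElem?_eq_none (by simp; omega)] at h; cases h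
              subst hi2
              rw [List.getElem?_concat_length] at h
              cases h
              exact Or.inr (Or.inr (Or.inr rfl))
          · intro i m' h he
            rw [Dialogue.extend] at h
            by_cases hi : i < d.moves.length
            · rw [List.getElem?_append_left hi] at h; exact hSP i m' h he
            · have hi2 : i = d.moves.length := by
                by_contra hne
                rw [List.getElem?_eq_none (by simp; omega)] at h; cases h
              omega
          · intro i m' h ho hp
            rw [Dialogue.extend] at h
            by_cases hi : i < d.moves.length
            · rw [List.getElem?_append_left hi] at h
              exact W_extend p hd _ (hS2 i m' h ho hp)
            · have hi2 : i = d.moves.length := by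
                by_contra hne
                rw [List.getElem?_eq_none (by simp; omega)] at h; cases h
              subst hi2
              rw [List.getElem?_concat_length] at h
              cases h
              simp at hp
      · -- P asserted the atom p: impossible without a prior O assertion of p
        exfalso
        rw [hst] at hstL
        obtain ⟨j, hj1, hj2, hj3⟩ := hleg.2.1 L p heven hstL
        obtain ⟨mo, hmo, hmos⟩ := stmtAt_form hj3 (by omega)
        rcases moveAt_some hmo with ⟨y1, y2, y3⟩
        exact hW (hS2 (j - 1) mo y3 (by omega) hmos)
      · -- P attacked with ∧L: W holds, contradiction
        exfalso
        refine hW ?_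
        have hb : m₀.isAttack = true := by
          cases hb : m₀.isAttack
          · obtain ⟨a, χ, _, _, _, hdef⟩ := hOKm₀.2.2.2 hb
            rw [hst] at hdef
            generalize a.statement = s0 at hdef
            cases hdef
          · rfl
        obtain ⟨χ, hχ, hatt⟩ := hOKm₀.2.2.1 hb
        rw [hst] at hatt
        have hrodd : m₀.ref % 2 = 1 := by
          have := hOKm₀.2.1; omega
        rcases inv_oStmt p hIfull hrodd hχ with hχ' | hχ' | hχ' | hχ' <;>
          [skip; skip; skip; exact absurd hχ' (by simp)]
        all_goals injection hχ' with hχ'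
        · refine ⟨L, m₀, ?_, heven, hb, Or.inl hst, by rw [hχ]; rw [hχ']⟩
          have h' := moveAt_succ d (L - 1)
          rw [Nat.sub_add_cancel (by omega)] at h'
          rw [h', hm₀]
        · rw [hχ'] at hatt
          cases hatt
        · rw [hχ'] at hatt
          cases hatt
      · -- P attacked with ∧R: W holds, contradiction
        exfalso
        refine hW ?_
        have hb : m₀.isAttack = true := by
          cases hb : m₀.isAttack
          · obtain ⟨a, χ, _, _, _, hdef⟩ := hOKm₀.2.2.2 hb
            rw [hst] at hdef
            generalize a.statement = s0 at hdef
            cases hdef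
          · rfl
        obtain ⟨χ, hχ, hatt⟩ := hOKm₀.2.2.1 hb
        rw [hst] at hatt
        have hrodd : m₀.ref % 2 = 1 := by
          have := hOKm₀.2.1; omega
        rcases inv_oStmt p hIfull hrodd hχ with hχ' | hχ' | hχ' | hχ' <;>
          [skip; skip; skip; exact absurd hχ' (by simp)]
        all_goals injection hχ' with hχ'
        · refine ⟨L, m₀, ?_, heven, hb, Or.inr hst, by rw [hχ]; rw [hχ']⟩
          have h' := moveAt_succ d (L - 1)
          rw [Nat.sub_add_cancel (by omega)] at h'
          rw [h', hm₀]
        · rw [hχ'] at hatt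
          cases hatt
        · rw [hχ'] at hatt
          cases hatt

private theorem inv_init : Inv p ⟨ψ2 p, []⟩ := by
  refine ⟨rfl, ⟨?_, ?_, ?_⟩, ?_, ?_, ?_⟩
  · intro i m h
    simp [List.getElem?_eq_none] at h
  · intro n q hn hs
    rcases n with _ | k
    · simp [Dialogue.stmtAt, ψ2] at hs
    · rw [stmtAt_succ] at hs
      simp at hs
  · intro n₁ n₂ r hr h1 h2
    obtain ⟨m', hm', _, _⟩ := h1
    rcases moveAt_some hm' with ⟨_, h2, _⟩
    simp at h2
  all_goals intro i m h
  all_goals simp [List.getElem?_eq_none] at h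

private theorem part2_nowin : ∀ d : Dialogue,
    PWinningC rulesetN (fun _ _ => True) d → Inv p d → False := by
  intro d hw
  induction hw with
  | pMove d m hturn hm hC h ih => exact fun hI => ih (invP p hI hturn hm)
  | oMoves d hturn h ih =>
    intro hI
    obtain ⟨m, hm, hI'⟩ := invO p hI hturn
    exact ih m hm hI'

theorem part2_notvalid :
    ¬ valid rulesetN (.imp (.and (.atom p) (.atom p))
      (.neg (.neg (.and (.atom p) (.atom p))))) := by
  rintro ⟨hleg, hwin⟩
  exact part2_nowin p _ hwin (inv_init p)

end Part2b
/-- (Failure of uniform substitution for N) For an atom p, p → ¬¬p is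
N-valid but (p ∧ p) → ¬¬(p ∧ p) is not; hence the set of N-valid formulas
is not closed under uniform substitution. -/
theorem N_not_closed_under_substitution (p : ℕ) :
    valid rulesetN (.imp (.atom p) (.neg (.neg (.atom p)))) ∧
    ¬ valid rulesetN
        (.imp (.and (.atom p) (.atom p))
          (.neg (.neg (.and (.atom p) (.atom p))))) ∧
    ¬ (∀ (φ : Formula) (σ : ℕ → Formula),
        valid rulesetN φ → valid rulesetN (φ.subst σ)) := by
  refine ⟨part1_valid p, part2_notvalid p, ?_⟩
  intro h
  apply part2_notvalid p
  have := h (.imp (.atom p) (.neg (.neg (.atom p))))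
    (fun _ => .and (.atom p) (.atom p)) (part1_valid p)
  simpa [Formula.subst] using this

end LorenzenDialogues
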